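/- Let X be a metrizable topological space, A ⊆ X a nonempty closed subset, and let d and d' be two metrics on X, each inducing the topology of X. For a metric ρ on X define the quotient pseudometric collapsing A by D_ρ(x, y) = min(ρ(x, y), ρ(x, A) + ρ(y, A)), where ρ(x, A) = inf_{a∈A} ρ(x, a). Then the topologies on X induced by the pseudometrics D_d and D_{d'} coincide if and only if for every sequence (x_i) in X one has d(x_i, A) → 0 if and only if d'(x_i, A) → 0. -/

import Mathlib

/-- The distance from a point to a set, with respect to a distance function `d`. -/
noncomputable def setDist {X : Type*} (d : X → X → ℝ) (A : Set X) (x : X) : ℝ :=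
  sInf ((fun a => d x a) '' A)

/-- The quotient pseudometric on `X` collapsing `A`:
`D_ρ(x, y) = min(ρ(x, y), ρ(x, A) + ρ(y, A))`. -/
noncomputable def quotDist {X : Type*} (d : X → X → ℝ) (A : Set X) (x y : X) : ℝ :=
  min (d x y) (setDist d A x + setDist d A y)

/-- A set is open with respect to a distance function `ρ` if around every of its
points it contains a `ρ`-ball of some positive radius. -/
def IsOpenWrt {X : Type*} (ρ : X → X → ℝ) (s : Set X) : Prop :=
  ∀ x ∈ s, ∃ ε > 0, ∀ y, ρ x y < ε → y ∈ s

set_option linter.unusedSectionVars false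

section aux
open Filter

variable {X : Type*} {A : Set X} {d : X → X → ℝ}

lemma aux_nonneg (hd_symm : ∀ x y, d x y = d y x) (hd_tri : ∀ x y z, d x z ≤ d x y + d y z)
    (hd_eq : ∀ x y, d x y = 0 ↔ x = y) (x y : X) : 0 ≤ d x y := by
  have h0 : d x x = 0 := (hd_eq x x).2 rfl
  have h := hd_tri x y x
  rw [h0, hd_symm y x] at h
  linarith

lemma aux_setDist_nonneg (hnn : ∀ x y, 0 ≤ d x y) (x : X) : 0 ≤ setDist d A x :=
  Real.sInf_nonneg (by rintro r ⟨a, _, rfl⟩; exact hnn x a)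

lemma aux_setDist_le (hnn : ∀ x y, 0 ≤ d x y) {a : X} (ha : a ∈ A) (x : X) :
    setDist d A x ≤ d x a :=
  csInf_le ⟨0, by rintro r ⟨b, _, rfl⟩; exact hnn x b⟩ ⟨a, ha, rfl⟩

lemma aux_setDist_lip (hAne : A.Nonempty) (hnn : ∀ x y, 0 ≤ d x y)
    (hd_tri : ∀ x y z, d x z ≤ d x y + d y z) (x y : X) :
    setDist d A x ≤ d x y + setDist d A y := by
  have h : setDist d A x - d x y ≤ setDist d A y := by
    apply le_csInf (hAne.image _)
    rintro r ⟨a, ha, rfl⟩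
    have h1 : setDist d A x ≤ d x a := aux_setDist_le hnn ha x
    have h2 := hd_tri x y a
    simp only []
    linarith
  linarith

lemma aux_setDist_zero (hnn : ∀ x y, 0 ≤ d x y) (hd_eq : ∀ x y, d x y = 0 ↔ x = y)
    {a : X} (ha : a ∈ A) : setDist d A a = 0 :=
  le_antisymm (by have := aux_setDist_le hnn ha a; rwa [(hd_eq a a).2 rfl] at this)
    (aux_setDist_nonneg hnn a)

lemma aux_setDist_pos [TopologicalSpace X] (hA : IsClosed A) (hAne : A.Nonempty)
    (hd_top : ∀ s : Set X, IsOpen s ↔ IsOpenWrt d s) {x : X} (hx : x ∉ A) :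
    0 < setDist d A x := by
  have hop : IsOpenWrt d Aᶜ := (hd_top Aᶜ).1 hA.isOpen_compl
  obtain ⟨ε, hε, h⟩ := hop x hx
  refine lt_of_lt_of_le hε (le_csInf (hAne.image _) ?_)
  rintro r ⟨a, ha, rfl⟩
  by_contra hr
  push_neg at hr
  exact (h a hr) ha

lemma aux_quot_le_setDist (hnn : ∀ x y, 0 ≤ d x y) (hd_eq : ∀ x y, d x y = 0 ↔ x = y)
    {a : X} (ha : a ∈ A) (y : X) : quotDist d A a y ≤ setDist d A y := by
  have h0 : setDist d A a = 0 := aux_setDist_zero hnn hd_eq ha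
  unfold quotDist
  rw [h0, zero_add]
  exact min_le_right _ _

lemma aux_setDist_le_quot (hnn : ∀ x y, 0 ≤ d x y) (hd_symm : ∀ x y, d x y = d y x)
    {a : X} (ha : a ∈ A) (y : X) : setDist d A y ≤ quotDist d A a y := by
  apply le_min
  · have := aux_setDist_le hnn ha y
    rwa [hd_symm y a] at this
  · have h1 : 0 ≤ setDist d A a := aux_setDist_nonneg hnn a
    have h2 : (0:ℝ) ≤ setDist d A y := aux_setDist_nonneg hnn y
    linarith

lemma aux_tendsto_zero_iff (f : ℕ → ℝ) (hf : ∀ i, 0 ≤ f i) :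
    Tendsto f atTop (nhds 0) ↔ ∀ ε > 0, ∃ N, ∀ n ≥ N, f n < ε := by
  rw [Metric.tendsto_atTop]
  constructor
  · intro h ε hε
    obtain ⟨N, hN⟩ := h ε hε
    exact ⟨N, fun n hn => by have := hN n hn; rwa [Real.dist_eq, sub_zero, abs_of_nonneg (hf n)] at this⟩
  · intro h ε hε
    obtain ⟨N, hN⟩ := h ε hε
    exact ⟨N, fun n hn => by rw [Real.dist_eq, sub_zero, abs_of_nonneg (hf n)]; exact hN n hn⟩

end aux
section main
open Filter

variable {X : Type*} [TopologicalSpace X] {A : Set X}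

lemma aux_gap {d d' : X → X → ℝ}
    (hnn' : ∀ x y, 0 ≤ d' x y) (hnn : ∀ x y, 0 ≤ d x y)
    (H : ∀ x : ℕ → X, Tendsto (fun i => setDist d' A (x i)) atTop (nhds 0) →
        Tendsto (fun i => setDist d A (x i)) atTop (nhds 0))
    {ε : ℝ} (hε : 0 < ε) : ∃ δ > 0, ∀ y, setDist d' A y < δ → setDist d A y < ε := by
  by_contra hc
  push_neg at hc
  choose y hy1 hy2 using fun n : ℕ => hc (1 / ((n : ℝ) + 1)) (by positivity)
  have h1 : Tendsto (fun n => setDist d' A (y n)) atTop (nhds 0) := by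
    apply squeeze_zero (fun n => aux_setDist_nonneg hnn' _) (fun n => (hy1 n).le)
    exact tendsto_one_div_add_atTop_nhds_zero_nat
  have h2 := H y h1
  rw [aux_tendsto_zero_iff _ (fun n => aux_setDist_nonneg hnn _)] at h2
  obtain ⟨N, hN⟩ := h2 ε hε
  exact absurd (hy2 N) (not_le.2 (hN N le_rfl))

lemma aux_fwd {d d' : X → X → ℝ} (hAne : A.Nonempty)
    (hnn : ∀ x y, 0 ≤ d x y) (hd_eq : ∀ x y, d x y = 0 ↔ x = y)
    (hnn' : ∀ x y, 0 ≤ d' x y) (hd'_tri : ∀ x y z, d' x z ≤ d' x y + d' y z)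
    (hd'_symm : ∀ x y, d' x y = d' y x) (hd'_eq : ∀ x y, d' x y = 0 ↔ x = y)
    (Hop : ∀ s : Set X, IsOpenWrt (quotDist d' A) s → IsOpenWrt (quotDist d A) s)
    (x : ℕ → X) (hx : Tendsto (fun i => setDist d A (x i)) atTop (nhds 0)) :
    Tendsto (fun i => setDist d' A (x i)) atTop (nhds 0) := by
  rw [aux_tendsto_zero_iff _ (fun n => aux_setDist_nonneg hnn' _)]
  intro ε hε
  set s : Set X := {y | setDist d' A y < ε} with hs_def
  have hs : IsOpenWrt (quotDist d' A) s := by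
    intro y hy
    refine ⟨ε - setDist d' A y, by simpa [hs_def] using hy, fun z hz => ?_⟩
    rcases min_lt_iff.mp hz with h1 | h2
    · have := aux_setDist_lip hAne hnn' hd'_tri z y
      rw [hd'_symm z y] at this
      simp only [hs_def, Set.mem_setOf_eq]
      linarith
    · have h3 : 0 ≤ setDist d' A y := aux_setDist_nonneg hnn' y
      simp only [hs_def, Set.mem_setOf_eq]
      linarith
  obtain ⟨a, ha⟩ := hAne
  have has : a ∈ s := by
    simp only [hs_def, Set.mem_setOf_eq, aux_setDist_zero hnn' hd'_eq ha]
    exact hε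
  obtain ⟨δ, hδ, h⟩ := Hop s hs a has
  rw [aux_tendsto_zero_iff _ (fun n => aux_setDist_nonneg hnn _)] at hx
  obtain ⟨N, hN⟩ := hx δ hδ
  refine ⟨N, fun n hn => ?_⟩
  have hmem := h (x n) (lt_of_le_of_lt (aux_quot_le_setDist hnn hd_eq ha (x n)) (hN n hn))
  simpa [hs_def] using hmem

lemma aux_bwd {d d' : X → X → ℝ} (hA : IsClosed A) (hAne : A.Nonempty)
    (hnn : ∀ x y, 0 ≤ d x y) (hd_eq : ∀ x y, d x y = 0 ↔ x = y)
    (hd_tri : ∀ x y z, d x z ≤ d x y + d y z)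
    (hd_top : ∀ s : Set X, IsOpen s ↔ IsOpenWrt d s)
    (hnn' : ∀ x y, 0 ≤ d' x y) (hd'_symm : ∀ x y, d' x y = d' y x)
    (hd'_top : ∀ s : Set X, IsOpen s ↔ IsOpenWrt d' s)
    (Hseq : ∀ x : ℕ → X, Tendsto (fun i => setDist d' A (x i)) atTop (nhds 0) →
        Tendsto (fun i => setDist d A (x i)) atTop (nhds 0))
    (s : Set X) (hs : IsOpenWrt (quotDist d A) s) : IsOpenWrt (quotDist d' A) s := by
  intro x hx
  obtain ⟨ε, hε, hball⟩ := hs x hx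
  by_cases hxA : x ∈ A
  · obtain ⟨δ, hδ, h⟩ := aux_gap hnn' hnn Hseq hε
    refine ⟨δ, hδ, fun y hy => hball y ?_⟩
    have h1 : setDist d' A y < δ :=
      lt_of_le_of_lt (aux_setDist_le_quot hnn' hd'_symm hxA y) hy
    exact lt_of_le_of_lt (aux_quot_le_setDist hnn hd_eq hxA y) (h y h1)
  · have hpos : 0 < setDist d' A x := aux_setDist_pos hA hAne hd'_top hxA
    set t : Set X := {y | d x y < ε} with ht_def
    have ht : IsOpenWrt d t := by
      intro y hy
      refine ⟨ε - d x y, by simpa [ht_def] using hy, fun z hz => ?_⟩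
      have := hd_tri x y z
      simp only [ht_def, Set.mem_setOf_eq]
      linarith
    have ht' : IsOpenWrt d' t := (hd'_top t).1 ((hd_top t).2 ht)
    obtain ⟨δ', hδ', h'⟩ := ht' x (by simp [ht_def, (hd_eq x x).2 rfl, hε])
    refine ⟨min δ' (setDist d' A x), lt_min hδ' hpos, fun y hy => ?_⟩
    have hxy : d' x y < δ' := by
      rcases min_lt_iff.mp hy with h1 | h2
      · exact lt_of_lt_of_le h1 (min_le_left _ _)
      · have h3 : 0 ≤ setDist d' A y := aux_setDist_nonneg hnn' y
        have h4 := min_le_right δ' (setDist d' A x)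
        exfalso; linarith
    have hdxy : d x y < ε := by
      have := h' y hxy
      simpa [ht_def] using this
    exact hball y (lt_of_le_of_lt (min_le_left _ _) hdxy)

end main

/-- **Lemma on metric quotients.**
Let `X` be a metrizable space, `A ⊆ X` a nonempty closed subset, and `d`, `d'` two
metrics inducing the topology of `X`. Then the topologies induced by the quotient
pseudometrics `D_d` and `D_{d'}` collapsing `A` coincide if and only if, for every
sequence `(x_i)` in `X`, `d(x_i, A) → 0` iff `d'(x_i, A) → 0`. -/
theorem stmt18 {X : Type*} [TopologicalSpace X]
    (A : Set X) (hA : IsClosed A) (hAne : A.Nonempty)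
    (d : X → X → ℝ)
    (hd_symm : ∀ x y, d x y = d y x)
    (hd_tri : ∀ x y z, d x z ≤ d x y + d y z)
    (hd_eq : ∀ x y, d x y = 0 ↔ x = y)
    (hd_top : ∀ s : Set X, IsOpen s ↔ IsOpenWrt d s)
    (d' : X → X → ℝ)
    (hd'_symm : ∀ x y, d' x y = d' y x)
    (hd'_tri : ∀ x y z, d' x z ≤ d' x y + d' y z)
    (hd'_eq : ∀ x y, d' x y = 0 ↔ x = y)
    (hd'_top : ∀ s : Set X, IsOpen s ↔ IsOpenWrt d' s) :
    (∀ s : Set X, IsOpenWrt (quotDist d A) s ↔ IsOpenWrt (quotDist d' A) s) ↔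
      (∀ x : ℕ → X,
        (Filter.Tendsto (fun i => setDist d A (x i)) Filter.atTop (nhds 0) ↔
          Filter.Tendsto (fun i => setDist d' A (x i)) Filter.atTop (nhds 0))) := by
  have hnn : ∀ x y, 0 ≤ d x y := aux_nonneg hd_symm hd_tri hd_eq
  have hnn' : ∀ x y, 0 ≤ d' x y := aux_nonneg hd'_symm hd'_tri hd'_eq
  constructor
  · intro H x
    constructor
    · exact aux_fwd hAne hnn hd_eq hnn' hd'_tri hd'_symm hd'_eq (fun s => (H s).2) x
    · exact aux_fwd hAne hnn' hd'_eq hnn hd_tri hd_symm hd_eq (fun s => (H s).1) x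
  · intro H s
    constructor
    · exact aux_bwd hA hAne hnn hd_eq hd_tri hd_top hnn' hd'_symm hd'_top
        (fun x => (H x).2) s
    · exact aux_bwd hA hAne hnn' hd'_eq hd'_tri hd'_top hnn hd_symm hd_top
        (fun x => (H x).1) s
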